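/- arXiv:1908.04159 — 5 statements merged into one kernel-verified Lean document; each statement's English description precedes it below -/
import Mathlib

section
/- Let l ≥ 1, let α_1,…,α_l and γ_1,…,γ_l be positive real constants, and let F : ℂ^l → ℂ be differentiable in the real sense. Define f_k : ℂ^l → ℂ by condition (H3), i.e. f_k(z) = ∂F/∂z̄_k(z) + conj(∂F/∂z_k(z)) = 2 ∂(Re F)/∂z̄_k(z), and assume condition (H4). Then the gauge condition holds: for every θ ∈ ℝ, every z = (z_1,…,z_l) ∈ ℂ^l and every k ∈ {1,…,l}, f_k(e^{i(α_1/γ_1)θ} z_1, …, e^{i(α_l/γ_l)θ} z_l) = e^{i(α_k/γ_k)θ} f_k(z_1,…,z_l). -/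
open Complex MeasureTheory

/-- Wirtinger derivative `∂h/∂z_m` of a function `h : ℂ^l → ℂ`, differentiable in the
real sense: `(1/2)(∂h/∂x_m − i ∂h/∂y_m)`. -/
noncomputable def wderiv {l : ℕ} (h : (Fin l → ℂ) → ℂ) (m : Fin l) (z : Fin l → ℂ) : ℂ :=
  (1 / 2) * (fderiv ℝ h z (Pi.single m 1) - Complex.I * fderiv ℝ h z (Pi.single m Complex.I))

/-- Conjugate Wirtinger derivative `∂h/∂z̄_m = (1/2)(∂h/∂x_m + i ∂h/∂y_m)`. -/
noncomputable def wderivBar {l : ℕ} (h : (Fin l → ℂ) → ℂ) (m : Fin l) (z : Fin l → ℂ) : ℂ :=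
  (1 / 2) * (fderiv ℝ h z (Pi.single m 1) + Complex.I * fderiv ℝ h z (Pi.single m Complex.I))

theorem stmt_5 (l : ℕ) (hl : 1 ≤ l) (α γ : Fin l → ℝ)
    (hα : ∀ k, 0 < α k) (hγ : ∀ k, 0 < γ k)
    (F : (Fin l → ℂ) → ℂ) (hF : Differentiable ℝ F)
    (f : Fin l → (Fin l → ℂ) → ℂ)
    -- (H3)
    (hf : ∀ (k : Fin l) (z : Fin l → ℂ),
      f k z = wderivBar F k z + (starRingEnd ℂ) (wderiv F k z))
    -- (H4)
    (hH4 : ∀ (θ : ℝ) (z : Fin l → ℂ),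
      (F (fun m => Complex.exp (Complex.I * ((α m / γ m : ℝ) : ℂ) * (θ : ℂ)) * z m)).re
        = (F z).re) :
    -- Gauge condition (GC)
    ∀ (θ : ℝ) (z : Fin l → ℂ) (k : Fin l),
      f k (fun m => Complex.exp (Complex.I * ((α m / γ m : ℝ) : ℂ) * (θ : ℂ)) * z m)
        = Complex.exp (Complex.I * ((α k / γ k : ℝ) : ℂ) * (θ : ℂ)) * f k z := by
  intro θ z k
  set c : Fin l → ℂ := fun m => Complex.exp (Complex.I * ((α m / γ m : ℝ) : ℂ) * (θ : ℂ)) with hc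
  set T : (Fin l → ℂ) →L[ℝ] (Fin l → ℂ) :=
    ContinuousLinearMap.pi (fun m =>
      ((c m • (ContinuousLinearMap.proj m : (Fin l → ℂ) →L[ℂ] ℂ)).restrictScalars ℝ)) with hT
  have hTapp : ∀ (w : Fin l → ℂ), T w = fun m => c m * w m := by
    intro w; funext m; simp [hT, smul_eq_mul]
  set G : (Fin l → ℂ) → ℝ := fun w => (F w).re with hG
  have hGd : Differentiable ℝ G := Complex.reCLM.differentiable.comp hF
  have hGF : ∀ (w v : Fin l → ℂ), fderiv ℝ G w v = (fderiv ℝ F w v).re := by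
    intro w v
    have : fderiv ℝ G w = Complex.reCLM.comp (fderiv ℝ F w) :=
      (Complex.reCLM.hasFDerivAt.comp w (hF w).hasFDerivAt).fderiv
    rw [this]; rfl
  have hGT : (fun w => G (T w)) = G := by
    funext w
    simp only [hG, hTapp]
    exact hH4 θ w
  have hchain : ∀ (w v : Fin l → ℂ), fderiv ℝ G (T w) (T v) = fderiv ℝ G w v := by
    intro w v
    have h1 : fderiv ℝ (G ∘ T) w = (fderiv ℝ G (T w)).comp (fderiv ℝ T w) :=
      fderiv_comp w (hGd (T w)) (T.differentiableAt)
    rw [T.fderiv] at h1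
    have h2 : (G ∘ ⇑T) = G := by funext w; exact congrFun hGT w
    rw [h2] at h1
    exact (congrFun (congrArg DFunLike.coe h1) v).symm
  have hfe : ∀ w, f k w
      = ((fderiv ℝ G w (Pi.single k 1) : ℝ) : ℂ)
        + Complex.I * ((fderiv ℝ G w (Pi.single k Complex.I) : ℝ) : ℂ) := by
    intro w
    rw [hf, wderivBar, wderiv, hGF w (Pi.single k 1), hGF w (Pi.single k Complex.I)]
    apply Complex.ext <;> simp <;> ring
  have hck0 : c k ≠ 0 := Complex.exp_ne_zero _
  set a : ℝ := Real.cos (α k / γ k * θ) with ha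
  set b : ℝ := Real.sin (α k / γ k * θ) with hb
  have hck : c k = (a : ℂ) + (b : ℂ) * Complex.I := by
    show Complex.exp (Complex.I * ((α k / γ k : ℝ) : ℂ) * (θ : ℂ)) = (a : ℂ) + (b : ℂ) * Complex.I
    have : Complex.I * ((α k / γ k : ℝ) : ℂ) * (θ : ℂ) = ((α k / γ k * θ : ℝ) : ℂ) * Complex.I := by
      push_cast; ring
    rw [this, Complex.exp_mul_I]
    simp [ha, hb]
  have hinv : (c k)⁻¹ = (a : ℂ) - (b : ℂ) * Complex.I := by
    show (Complex.exp (Complex.I * ((α k / γ k : ℝ) : ℂ) * (θ : ℂ)))⁻¹ = _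
    rw [← Complex.exp_neg]
    have : -(Complex.I * ((α k / γ k : ℝ) : ℂ) * (θ : ℂ))
        = ((-(α k / γ k * θ) : ℝ) : ℂ) * Complex.I := by push_cast; ring
    rw [this, Complex.exp_mul_I]
    simp [ha, hb]
    ring
  have hTsingle : ∀ (w : ℂ), T (Pi.single k w) = Pi.single k (c k * w) := by
    intro w
    rw [hTapp]; funext m
    rcases eq_or_ne m k with h | h
    · subst h; simp
    · simp [Pi.single_eq_of_ne h]
  have hs1 : Pi.single k ((c k)⁻¹) = a • (Pi.single k (1 : ℂ) : Fin l → ℂ) + (-b) • (Pi.single k Complex.I : Fin l → ℂ) := by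
    funext m
    rcases eq_or_ne m k with h | h
    · subst h; simp [hinv, Complex.real_smul]; push_cast; ring
    · simp [Pi.single_eq_of_ne h]
  have hs2 : Pi.single k ((c k)⁻¹ * Complex.I)
      = b • (Pi.single k (1 : ℂ) : Fin l → ℂ) + a • (Pi.single k Complex.I : Fin l → ℂ) := by
    funext m
    rcases eq_or_ne m k with h | h
    · subst h; simp [hinv, Complex.real_smul]; push_cast
      linear_combination (-(b : ℂ)) * Complex.I_sq
    · simp [Pi.single_eq_of_ne h]
  set L1 : ℝ := fderiv ℝ G z (Pi.single k 1) with hL1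
  set L2 : ℝ := fderiv ℝ G z (Pi.single k Complex.I) with hL2
  have e1 : fderiv ℝ G (T z) (Pi.single k 1) = a * L1 - b * L2 := by
    have h0 : Pi.single k (1 : ℂ) = T (Pi.single k ((c k)⁻¹)) := by
      rw [hTsingle, mul_inv_cancel₀ hck0]
    rw [h0, hchain, hs1, map_add, (fderiv ℝ G z).map_smul, (fderiv ℝ G z).map_smul]
    simp only [smul_eq_mul, ← hL1, ← hL2]; ring
  have e2 : fderiv ℝ G (T z) (Pi.single k Complex.I) = b * L1 + a * L2 := by
    have h0 : Pi.single k Complex.I = T (Pi.single k ((c k)⁻¹ * Complex.I)) := by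
      rw [hTsingle, ← mul_assoc, mul_inv_cancel₀ hck0, one_mul]
    rw [h0, hchain, hs2, map_add, (fderiv ℝ G z).map_smul, (fderiv ℝ G z).map_smul]
    simp only [smul_eq_mul, ← hL1, ← hL2]
  have hTz : (fun m => c m * z m) = T z := (hTapp z).symm
  calc f k (fun m => c m * z m) = f k (T z) := by rw [hTz]
    _ = ((a * L1 - b * L2 : ℝ) : ℂ) + Complex.I * ((b * L1 + a * L2 : ℝ) : ℂ) := by
        rw [hfe, e1, e2]
    _ = c k * f k z := by
        rw [hfe, hck, ← hL1, ← hL2]; push_cast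
        linear_combination (-(b : ℂ) * (L2 : ℂ)) * Complex.I_sq
end

section
/- Let l ≥ 1, let α_1,…,α_l and γ_1,…,γ_l be positive real constants, and let F : ℂ^l → ℂ be differentiable in the real sense. Define f_k : ℂ^l → ℂ by condition (H3) and assume condition (H4). Then for every z = (z_1,…,z_l) ∈ ℂ^l: Im ∑_{k=1}^l (α_k/γ_k) f_k(z) · conj(z_k) = 0. -/
open Complex MeasureTheory

theorem stmt_6 (l : ℕ) (hl : 1 ≤ l) (α γ : Fin l → ℝ)
    (hα : ∀ k, 0 < α k) (hγ : ∀ k, 0 < γ k)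
    (F : (Fin l → ℂ) → ℂ) (hF : Differentiable ℝ F)
    (f : Fin l → (Fin l → ℂ) → ℂ)
    -- (H3)
    (hf : ∀ (k : Fin l) (z : Fin l → ℂ),
      f k z = wderivBar F k z + (starRingEnd ℂ) (wderiv F k z))
    -- (H4)
    (hH4 : ∀ (θ : ℝ) (z : Fin l → ℂ),
      (F (fun m => Complex.exp (Complex.I * ((α m / γ m : ℝ) : ℂ) * (θ : ℂ)) * z m)).re
        = (F z).re) :
    ∀ z : Fin l → ℂ,
      (∑ k, ((α k / γ k : ℝ) : ℂ) * f k z * (starRingEnd ℂ) (z k)).im = 0 := by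
  intro z
  set c : Fin l → ℝ := fun k => α k / γ k with hc
  set L := fderiv ℝ F z with hL
  set A : Fin l → ℂ := fun k => L (Pi.single k 1) with hA
  set B : Fin l → ℂ := fun k => L (Pi.single k Complex.I) with hB
  set v : Fin l → ℂ := fun m => Complex.I * (c m : ℂ) * z m with hv
  -- derivative of the flow
  have hφ : HasDerivAt (fun θ : ℝ => (fun m => Complex.exp (Complex.I * ((c m : ℝ) : ℂ) * (θ : ℂ)) * z m)) v 0 := by
    rw [hasDerivAt_pi]
    intro m
    have h1 : HasDerivAt (fun w : ℂ => Complex.exp (Complex.I * (c m : ℂ) * w) * z m)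
        (Complex.I * (c m : ℂ) * Complex.exp (Complex.I * (c m : ℂ) * (0:ℝ)) * z m) ((0:ℝ) : ℂ) := by
      have := (((hasDerivAt_id ((0:ℝ):ℂ)).const_mul (Complex.I * (c m : ℂ))).cexp).mul_const (z m)
      simpa [mul_comm] using this
    have := h1.comp_ofReal
    simpa [hv] using this
  -- derivative of θ ↦ Re (F (flow θ)) at 0
  have hg : HasDerivAt (fun θ : ℝ => (F (fun m => Complex.exp (Complex.I * ((c m : ℝ) : ℂ) * (θ : ℂ)) * z m)).re) ((L v).re) 0 := by
    have h2 := (hF _).hasFDerivAt.comp_hasDerivAt 0 hφ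
    have h3 := (Complex.reCLM.hasFDerivAt.comp_hasDerivAt 0 h2)
    simp at h3
    exact h3
  have hg0 : HasDerivAt (fun θ : ℝ => (F (fun m => Complex.exp (Complex.I * ((c m : ℝ) : ℂ) * (θ : ℂ)) * z m)).re) 0 0 := by
    have : (fun θ : ℝ => (F (fun m => Complex.exp (Complex.I * ((c m : ℝ) : ℂ) * (θ : ℂ)) * z m)).re)
        = fun _ : ℝ => (F z).re := by
      funext θ; exact hH4 θ z
    rw [this]; exact hasDerivAt_const 0 _
  have hkey : (L v).re = 0 := by
    have := hg.unique hg0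
    exact this
  -- expand L v
  have hvsum : v = ∑ k, Pi.single k (v k) := by
    funext m
    simp [Pi.single_apply, Finset.sum_ite_eq]
  have hsingle : ∀ k : Fin l, Pi.single k (v k) =
      (v k).re • (Pi.single k 1 : Fin l → ℂ) + (v k).im • (Pi.single k Complex.I : Fin l → ℂ) := by
    intro k
    funext m
    by_cases h : m = k
    · subst h
      simp [Complex.real_smul]
    · simp [Pi.single_apply, h]
  have hLv : L v = ∑ k, ((v k).re • A k + (v k).im • B k) := by
    have h0 : L v = L (∑ k, Pi.single k (v k)) := by rw [← hvsum]
    rw [h0, map_sum]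
    refine Finset.sum_congr rfl fun k _ => ?_
    rw [hsingle k, L.map_add, L.map_smul, L.map_smul]
  -- v k components
  have hvre : ∀ k, (v k).re = - (c k * (z k).im) := by
    intro k; simp [hv]
  have hvim : ∀ k, (v k).im = c k * (z k).re := by
    intro k; simp [hv, mul_comm]
  -- f k z in terms of A, B
  have hfAB : ∀ k, f k z = ((A k).re : ℂ) + ((B k).re : ℂ) * Complex.I := by
    intro k
    rw [hf k z]
    unfold wderiv wderivBar
    rw [← hL]
    apply Complex.ext <;>
      simp [Complex.add_re, Complex.add_im, Complex.mul_re, Complex.mul_im] <;> ring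
  -- finish
  have hre : (∑ k, ((v k).re • A k + (v k).im • B k)).re = 0 := by
    rw [← hLv]; exact hkey
  rw [Complex.im_sum]
  rw [Complex.re_sum] at hre
  calc ∑ k, (((c k : ℝ) : ℂ) * f k z * (starRingEnd ℂ) (z k)).im
      = ∑ k, ((v k).re • A k + (v k).im • B k).re := by
        refine Finset.sum_congr rfl fun k _ => ?_
        rw [hfAB k, hvre k, hvim k]
        simp [Complex.mul_re, Complex.mul_im, Complex.add_re, Complex.smul_re]
        ring
    _ = 0 := hre
end

section
/- Let l ≥ 1, let F : ℂ^l → ℂ be differentiable in the real sense and homogeneous of degree 3, and define f_k by condition (H3). Assume the functions f_k are differentiable in the real sense and satisfy conditions (H1) and (H2). Then there is a constant C' > 0, depending only on the constant C of (H2) and on l, such that for all z, z' ∈ ℂ^l: |Re F(z) − Re F(z')| ≤ C' ∑_{m=1}^l ∑_{j=1}^l (|z_j|² + |z_j'|²) |z_m − z_m'|, and moreover |Re F(z)| ≤ C' ∑_{j=1}^l |z_j|³. -/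
open Complex MeasureTheory

lemma clm_decomp {l : ℕ} (D : (Fin l → ℂ) →L[ℝ] ℂ) (v : Fin l → ℂ) :
    D v = ∑ m, ((1/2 : ℂ) * (D (Pi.single m 1) - Complex.I * D (Pi.single m Complex.I)) * v m
      + (1/2 : ℂ) * (D (Pi.single m 1) + Complex.I * D (Pi.single m Complex.I))
        * (starRingEnd ℂ) (v m)) := by
  have hv : v = ∑ m, Pi.single m (v m) := by
    ext j
    simp [Pi.single_apply]
  conv_lhs => rw [hv]
  rw [map_sum]
  refine Finset.sum_congr rfl fun m _ => ?_
  have hsplit : Pi.single m (v m)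
      = (v m).re • (Pi.single m 1 : Fin l → ℂ) + (v m).im • (Pi.single m Complex.I : Fin l → ℂ) := by
    ext j
    by_cases h : j = m
    · subst h
      simp only [Pi.add_apply, Pi.smul_apply, Pi.single_eq_same, Complex.real_smul, mul_one]
      exact (Complex.re_add_im (v j)).symm
    · simp [Pi.single_apply, h]
  rw [hsplit, map_add, D.map_smul, D.map_smul, Complex.real_smul, Complex.real_smul]
  apply Complex.ext <;>
    simp [Complex.add_re, Complex.add_im, Complex.mul_re, Complex.mul_im,
      Complex.conj_re, Complex.conj_im, Complex.div_re, Complex.div_im,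
      Complex.normSq_apply] <;> ring

/-- Pointwise Wirtinger decomposition of the real fderiv. -/
lemma fderiv_decomp {l : ℕ} (h : (Fin l → ℂ) → ℂ) (z v : Fin l → ℂ) :
    fderiv ℝ h z v = ∑ m, (wderiv h m z * v m + wderivBar h m z * (starRingEnd ℂ) (v m)) := by
  simpa [wderiv, wderivBar] using clm_decomp (fderiv ℝ h z) v

/-- derivative scaling for a positively 3-homogeneous function -/
lemma fderiv_scale {l : ℕ} {F : (Fin l → ℂ) → ℂ} (hF : Differentiable ℝ F)
    (hhom : ∀ (c : ℝ), 0 < c → ∀ z : Fin l → ℂ,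
      F (fun j => (c : ℂ) * z j) = (c : ℂ) ^ 3 * F z)
    {c : ℝ} (hc : 0 < c) (z v : Fin l → ℂ) :
    fderiv ℝ F (c • z) v = (c : ℂ) ^ 2 * fderiv ℝ F z v := by
  have hsm : ∀ w : Fin l → ℂ, (fun j => (c : ℂ) * w j) = c • w := by
    intro w; funext j; simp [Complex.real_smul]
  have h1 : HasFDerivAt (fun x : Fin l → ℂ => F (c • x))
      ((fderiv ℝ F (c • z)).comp (c • ContinuousLinearMap.id ℝ (Fin l → ℂ))) z := by
    have hs : HasFDerivAt (fun x : Fin l → ℂ => c • x)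
        (c • ContinuousLinearMap.id ℝ (Fin l → ℂ)) z := (hasFDerivAt_id z).const_smul c
    exact (hF (c • z)).hasFDerivAt.comp z hs
  have h2 : HasFDerivAt (fun x : Fin l → ℂ => (c : ℂ) ^ 3 * F x)
      ((c : ℂ) ^ 3 • fderiv ℝ F z) z := (hF z).hasFDerivAt.const_mul _
  have heq : (fun x : Fin l → ℂ => F (c • x)) = fun x : Fin l → ℂ => (c : ℂ) ^ 3 * F x := by
    funext x
    rw [← hsm x, hhom c hc x]
  rw [heq] at h1
  have := h1.unique h2
  have happ := congrArg (fun (D : (Fin l → ℂ) →L[ℝ] ℂ) => D v) this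
  simp only [ContinuousLinearMap.coe_comp', Function.comp_apply,
    ContinuousLinearMap.coe_smul', Pi.smul_apply, ContinuousLinearMap.smul_apply,
    ContinuousLinearMap.coe_id', id_eq] at happ
  -- happ : fderiv ℝ F (c • z) (c • v) = (c:ℂ)^3 • fderiv ℝ F z v
  have hlin : fderiv ℝ F (c • z) (c • v) = c • fderiv ℝ F (c • z) v :=
    (fderiv ℝ F (c • z)).map_smul c v
  rw [hlin] at happ
  have hc0 : (c : ℂ) ≠ 0 := by exact_mod_cast ne_of_gt hc
  have happ2 : (c : ℂ) * fderiv ℝ F (c • z) v = (c : ℂ) ^ 3 * fderiv ℝ F z v := by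
    simpa [Complex.real_smul, smul_eq_mul] using happ
  refine mul_left_cancel₀ hc0 ?_
  rw [happ2]; ring

/-- a differentiable positively 2-homogeneous function has vanishing derivative at 0 -/
lemma fderiv_zero_of_homog2 {l : ℕ} {g : (Fin l → ℂ) → ℂ} (hg : Differentiable ℝ g)
    (h0 : g 0 = 0)
    (hhom : ∀ (c : ℝ), 0 < c → ∀ z : Fin l → ℂ, g (c • z) = (c : ℂ) ^ 2 * g z)
    (v : Fin l → ℂ) : fderiv ℝ g 0 v = 0 := by
  have hc : Filter.Tendsto (fun n : ℕ => ‖(n : ℝ)‖) Filter.atTop Filter.atTop := by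
    simpa using tendsto_natCast_atTop_atTop (R := ℝ)
  have hlim := (hg 0).hasFDerivAt.lim v hc
  have hlim2 : Filter.Tendsto
      (fun n : ℕ => (n : ℝ) • (g ((0 : Fin l → ℂ) + ((n : ℝ))⁻¹ • v) - g 0))
      Filter.atTop (nhds 0) := by
    have h3 : Filter.Tendsto (fun n : ℕ => ((n : ℝ))⁻¹ • g v) Filter.atTop
        (nhds ((0 : ℝ) • g v)) :=
      (tendsto_inv_atTop_nhds_zero_nat).smul_const (g v)
    rw [zero_smul] at h3
    refine Filter.Tendsto.congr' ?_ h3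
    filter_upwards [Filter.eventually_ge_atTop 1] with n hn
    have hnpos : (0 : ℝ) < (n : ℝ) := by exact_mod_cast hn
    have hinv : (0 : ℝ) < ((n : ℝ))⁻¹ := inv_pos.mpr hnpos
    have hn0' : ((n : ℕ) : ℂ) ≠ 0 := Nat.cast_ne_zero.mpr (by omega)
    rw [zero_add, h0, sub_zero, hhom _ hinv v, Complex.real_smul, Complex.real_smul]
    push_cast
    field_simp
  exact tendsto_nhds_unique hlim hlim2

theorem stmt_7 (l : ℕ) (hl : 1 ≤ l) (C : ℝ) (hC : 0 < C) :
    ∃ C' : ℝ, 0 < C' ∧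
      ∀ (F : (Fin l → ℂ) → ℂ) (f : Fin l → (Fin l → ℂ) → ℂ),
        Differentiable ℝ F →
        -- F is homogeneous of degree 3
        (∀ (c : ℝ), 0 < c → ∀ z : Fin l → ℂ,
          F (fun j => (c : ℂ) * z j) = (c : ℂ) ^ 3 * F z) →
        -- (H3)
        (∀ (k : Fin l) (z : Fin l → ℂ),
          f k z = wderivBar F k z + (starRingEnd ℂ) (wderiv F k z)) →
        (∀ k, Differentiable ℝ (f k)) →
        -- (H1)
        (∀ k, f k 0 = 0) →
        -- (H2)
        (∀ (z z' : Fin l → ℂ) (k m : Fin l),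
          ‖wderiv (f k) m z - wderiv (f k) m z'‖ ≤ C * ∑ j, ‖z j - z' j‖ ∧
          ‖wderivBar (f k) m z - wderivBar (f k) m z'‖ ≤ C * ∑ j, ‖z j - z' j‖) →
        ∀ z z' : Fin l → ℂ,
          |(F z).re - (F z').re| ≤
            C' * ∑ m, ∑ j, (‖z j‖ ^ 2 + ‖z' j‖ ^ 2) * ‖z m - z' m‖ ∧
          |(F z).re| ≤ C' * ∑ j, ‖z j‖ ^ 3 := by
  have hl' : (0 : ℝ) < (l : ℝ) := by exact_mod_cast Nat.lt_of_lt_of_le Nat.zero_lt_one hl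
  have hl1 : (1 : ℝ) ≤ (l : ℝ) := by exact_mod_cast hl
  refine ⟨4 * C * (l : ℝ) ^ 4, by positivity, ?_⟩
  intro F f hF hhom hf3 hfd hf1 hf2 z z'
  -- f is positively homogeneous of degree 2
  have hfhom : ∀ (k : Fin l) (c : ℝ), 0 < c → ∀ w : Fin l → ℂ,
      f k (c • w) = (c : ℂ) ^ 2 * f k w := by
    intro k c hc w
    have h1 := fderiv_scale hF hhom hc w (Pi.single k 1)
    have h2 := fderiv_scale hF hhom hc w (Pi.single k Complex.I)
    rw [hf3 k (c • w), hf3 k w]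
    simp only [wderiv, wderivBar, h1, h2, map_mul, map_sub, map_add, map_pow,
      Complex.conj_ofReal, map_one, map_div₀, map_ofNat, Complex.conj_I]
    ring
  -- the derivative of each f k vanishes at 0
  have hfz : ∀ (k : Fin l) (v : Fin l → ℂ), fderiv ℝ (f k) 0 v = 0 := fun k v =>
    fderiv_zero_of_homog2 (hfd k) (hf1 k) (fun c hc w => hfhom k c hc w) v
  have hwzero : ∀ (k m : Fin l), wderiv (f k) m 0 = 0 ∧ wderivBar (f k) m 0 = 0 := by
    intro k m
    constructor <;> simp [wderiv, wderivBar, hfz]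
  -- pointwise bounds on Wirtinger derivatives of f
  have hwd : ∀ (w : Fin l → ℂ) (k m : Fin l), ‖wderiv (f k) m w‖ ≤ C * ∑ j, ‖w j‖ ∧
      ‖wderivBar (f k) m w‖ ≤ C * ∑ j, ‖w j‖ := by
    intro w k m
    have h := hf2 w 0 k m
    rw [(hwzero k m).1, sub_zero] at h
    rw [(hwzero k m).2, sub_zero] at h
    simpa using h
  -- operator norm bound on the derivative of f k
  have hop : ∀ (w : Fin l → ℂ) (k : Fin l),
      ‖fderiv ℝ (f k) w‖ ≤ 2 * C * (l : ℝ) * (∑ j, ‖w j‖) := by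
    intro w k
    have hSnn : (0 : ℝ) ≤ ∑ j, ‖w j‖ := Finset.sum_nonneg fun j _ => norm_nonneg _
    refine ContinuousLinearMap.opNorm_le_bound _ (by positivity) fun v => ?_
    rw [fderiv_decomp (f k) w v]
    refine (norm_sum_le _ _).trans ?_
    have hterm : ∀ m : Fin l,
        ‖wderiv (f k) m w * v m + wderivBar (f k) m w * (starRingEnd ℂ) (v m)‖
          ≤ (2 * C * (∑ j, ‖w j‖)) * ‖v‖ := by
      intro m
      refine (norm_add_le _ _).trans ?_
      rw [norm_mul, norm_mul, RCLike.norm_conj]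
      have e1 : ‖wderiv (f k) m w‖ * ‖v m‖ ≤ (C * ∑ j, ‖w j‖) * ‖v‖ :=
        mul_le_mul (hwd w k m).1 (norm_le_pi_norm v m) (norm_nonneg _) (by positivity)
      have e2 : ‖wderivBar (f k) m w‖ * ‖v m‖ ≤ (C * ∑ j, ‖w j‖) * ‖v‖ :=
        mul_le_mul (hwd w k m).2 (norm_le_pi_norm v m) (norm_nonneg _) (by positivity)
      nlinarith [e1, e2]
    calc ∑ m, ‖wderiv (f k) m w * v m + wderivBar (f k) m w * (starRingEnd ℂ) (v m)‖
        ≤ ∑ _m : Fin l, (2 * C * (∑ j, ‖w j‖)) * ‖v‖ :=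
          Finset.sum_le_sum fun m _ => hterm m
      _ = 2 * C * (l : ℝ) * (∑ j, ‖w j‖) * ‖v‖ := by
          rw [Finset.sum_const, Finset.card_univ, Fintype.card_fin, nsmul_eq_mul]
          ring
  -- quadratic bound on f k
  have hval : ∀ (w : Fin l → ℂ) (k : Fin l),
      ‖f k w‖ ≤ 2 * C * (l : ℝ) * (∑ j, ‖w j‖) ^ 2 := by
    intro w k
    have hSnn : (0 : ℝ) ≤ ∑ j, ‖w j‖ := Finset.sum_nonneg fun j _ => norm_nonneg _
    have hseg : ∀ u ∈ segment ℝ (0 : Fin l → ℂ) w,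
        ‖fderiv ℝ (f k) u‖ ≤ 2 * C * (l : ℝ) * (∑ j, ‖w j‖) := by
      intro u hu
      rw [segment_eq_image] at hu
      obtain ⟨t, ht, rfl⟩ := hu
      refine (hop _ k).trans ?_
      have hsum : ∑ j, ‖((1 - t) • (0 : Fin l → ℂ) + t • w) j‖ ≤ ∑ j, ‖w j‖ := by
        refine Finset.sum_le_sum fun j _ => ?_
        simp only [Pi.add_apply, Pi.smul_apply, Pi.zero_apply, smul_zero, zero_add]
        rw [norm_smul, Real.norm_eq_abs, _root_.abs_of_nonneg ht.1]
        nlinarith [norm_nonneg (w j), ht.2]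
      have : (0 : ℝ) ≤ 2 * C * (l : ℝ) := by positivity
      exact mul_le_mul_of_nonneg_left hsum this
    have hMV := (convex_segment (0 : Fin l → ℂ) w).norm_image_sub_le_of_norm_fderiv_le
      (fun u _ => (hfd k).differentiableAt) hseg (left_mem_segment ℝ _ _)
      (right_mem_segment ℝ _ _)
    rw [hf1 k, sub_zero, sub_zero] at hMV
    have hw : ‖w‖ ≤ ∑ j, ‖w j‖ := by
      refine (pi_norm_le_iff_of_nonneg hSnn).mpr fun j => ?_
      exact Finset.single_le_sum (fun i _ => norm_nonneg (w i)) (Finset.mem_univ j)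
    calc ‖f k w‖ ≤ 2 * C * (l : ℝ) * (∑ j, ‖w j‖) * ‖w‖ := hMV
      _ ≤ 2 * C * (l : ℝ) * (∑ j, ‖w j‖) * (∑ j, ‖w j‖) :=
          mul_le_mul_of_nonneg_left hw (by positivity)
      _ = 2 * C * (l : ℝ) * (∑ j, ‖w j‖) ^ 2 := by ring
  -- the real part of F
  set g : (Fin l → ℂ) → ℝ := fun x => (F x).re with hg
  have hgd : ∀ w : Fin l → ℂ, HasFDerivAt g (Complex.reCLM.comp (fderiv ℝ F w)) w :=
    fun w => (Complex.reCLM.hasFDerivAt).comp w (hF w).hasFDerivAt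
  have hgdiff : Differentiable ℝ g := fun w => (hgd w).differentiableAt
  have hre : ∀ w v : Fin l → ℂ,
      (Complex.reCLM.comp (fderiv ℝ F w)) v = ∑ k, (f k w * (starRingEnd ℂ) (v k)).re := by
    intro w v
    simp only [ContinuousLinearMap.coe_comp', Function.comp_apply, Complex.reCLM_apply]
    rw [fderiv_decomp F w v, Complex.re_sum]
    refine Finset.sum_congr rfl fun k _ => ?_
    rw [hf3 k w]
    simp only [Complex.add_re, Complex.mul_re, Complex.mul_im, Complex.conj_re,
      Complex.conj_im, Complex.add_im]
    ring
  -- operator norm bound on the derivative of g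
  have hgop : ∀ w : Fin l → ℂ,
      ‖Complex.reCLM.comp (fderiv ℝ F w)‖ ≤ 2 * C * (l : ℝ) ^ 2 * (∑ j, ‖w j‖) ^ 2 := by
    intro w
    have hSnn : (0 : ℝ) ≤ ∑ j, ‖w j‖ := Finset.sum_nonneg fun j _ => norm_nonneg _
    refine ContinuousLinearMap.opNorm_le_bound _ (by positivity) fun v => ?_
    rw [hre w v]
    calc ‖∑ k, (f k w * (starRingEnd ℂ) (v k)).re‖
        ≤ ∑ k, ‖(f k w * (starRingEnd ℂ) (v k)).re‖ := norm_sum_le _ _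
      _ ≤ ∑ k, ‖f k w‖ * ‖v k‖ := by
          refine Finset.sum_le_sum fun k _ => ?_
          rw [Real.norm_eq_abs]
          refine (Complex.abs_re_le_norm _).trans ?_
          rw [norm_mul, RCLike.norm_conj]
      _ ≤ ∑ _k : Fin l, (2 * C * (l : ℝ) * (∑ j, ‖w j‖) ^ 2) * ‖v‖ :=
          Finset.sum_le_sum fun k _ =>
            mul_le_mul (hval w k) (norm_le_pi_norm v k) (norm_nonneg _) (by positivity)
      _ = 2 * C * (l : ℝ) ^ 2 * (∑ j, ‖w j‖) ^ 2 * ‖v‖ := by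
          rw [Finset.sum_const, Finset.card_univ, Fintype.card_fin, nsmul_eq_mul]
          ring
  -- the key Lipschitz-type estimate
  have key : ∀ a b : Fin l → ℂ,
      |(F a).re - (F b).re| ≤
        (2 * C * (l : ℝ) ^ 3) * ∑ m, ∑ j, (‖a j‖ ^ 2 + ‖b j‖ ^ 2) * ‖a m - b m‖ := by
    intro a b
    set S : ℝ := ∑ j, (‖a j‖ ^ 2 + ‖b j‖ ^ 2) with hS
    have hSnn : (0 : ℝ) ≤ S := Finset.sum_nonneg fun j _ => by positivity
    have hsegbound : ∀ u ∈ segment ℝ b a,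
        ‖fderiv ℝ g u‖ ≤ 2 * C * (l : ℝ) ^ 3 * S := by
      intro u hu
      rw [segment_eq_image] at hu
      obtain ⟨t, ht, rfl⟩ := hu
      rw [(hgd _).fderiv]
      refine (hgop _).trans ?_
      have hsq : ∑ j, ‖((1 - t) • b + t • a) j‖ ^ 2 ≤ S := by
        refine Finset.sum_le_sum fun j _ => ?_
        have h1 : ‖((1 - t) • b + t • a) j‖ ≤ (1 - t) * ‖b j‖ + t * ‖a j‖ := by
          simp only [Pi.add_apply, Pi.smul_apply]
          refine (norm_add_le _ _).trans ?_
          rw [norm_smul, norm_smul, Real.norm_eq_abs, Real.norm_eq_abs,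
            _root_.abs_of_nonneg (by linarith [ht.2] : (0:ℝ) ≤ 1 - t),
            _root_.abs_of_nonneg ht.1]
        have h2 : ‖((1 - t) • b + t • a) j‖ ^ 2 ≤ ((1 - t) * ‖b j‖ + t * ‖a j‖) ^ 2 :=
          pow_le_pow_left₀ (norm_nonneg _) h1 2
        have ht1 : (0:ℝ) ≤ 1 - t := by linarith [ht.2]
        nlinarith [h2, mul_nonneg (sq_nonneg ‖a j‖) ht1, mul_nonneg (sq_nonneg ‖b j‖) ht.1,
          mul_nonneg (mul_nonneg ht.1 ht1) (sq_nonneg (‖a j‖ - ‖b j‖))]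
      have hcs : (∑ j, ‖((1 - t) • b + t • a) j‖) ^ 2
          ≤ (l : ℝ) * ∑ j, ‖((1 - t) • b + t • a) j‖ ^ 2 := by
        have := sq_sum_le_card_mul_sum_sq
          (s := (Finset.univ : Finset (Fin l))) (f := fun j => ‖((1 - t) • b + t • a) j‖)
        simpa [Finset.card_univ] using this
      calc 2 * C * (l : ℝ) ^ 2 * (∑ j, ‖((1 - t) • b + t • a) j‖) ^ 2
          ≤ 2 * C * (l : ℝ) ^ 2 * ((l : ℝ) * ∑ j, ‖((1 - t) • b + t • a) j‖ ^ 2) :=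
            mul_le_mul_of_nonneg_left hcs (by positivity)
        _ ≤ 2 * C * (l : ℝ) ^ 2 * ((l : ℝ) * S) := by
            refine mul_le_mul_of_nonneg_left ?_ (by positivity)
            exact mul_le_mul_of_nonneg_left hsq (by positivity)
        _ = 2 * C * (l : ℝ) ^ 3 * S := by ring
    have hMV := (convex_segment b a).norm_image_sub_le_of_norm_fderiv_le
      (fun u _ => hgdiff.differentiableAt) hsegbound (left_mem_segment ℝ _ _)
      (right_mem_segment ℝ _ _)
    -- hMV : ‖g a - g b‖ ≤ 2*C*l^3*S * ‖a - b‖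
    have habs : ‖a - b‖ ≤ ∑ m, ‖a m - b m‖ := by
      refine (pi_norm_le_iff_of_nonneg
        (Finset.sum_nonneg fun m _ => norm_nonneg _)).mpr fun m => ?_
      have : ‖(a - b) m‖ = ‖a m - b m‖ := rfl
      rw [this]
      exact Finset.single_le_sum (fun i _ => norm_nonneg (a i - b i)) (Finset.mem_univ m)
    have : |(F a).re - (F b).re| ≤ 2 * C * (l : ℝ) ^ 3 * S * ∑ m, ‖a m - b m‖ := by
      rw [← Real.norm_eq_abs]
      refine hMV.trans ?_
      exact mul_le_mul_of_nonneg_left habs (by positivity)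
    refine this.trans ?_
    rw [mul_assoc, Finset.mul_sum]
    refine le_of_eq ?_
    congr 1
    refine Finset.sum_congr rfl fun m _ => ?_
    rw [hS, Finset.sum_mul]
  -- F vanishes at 0
  have hF0 : (F 0).re = 0 := by
    have h8 := hhom 2 (by norm_num) 0
    have h0 : (fun j : Fin l => (((2:ℝ)) : ℂ) * (0 : Fin l → ℂ) j) = (0 : Fin l → ℂ) := by
      funext j; simp
    rw [h0] at h8
    have : F 0 = 0 := by
      have h8' : F 0 = 8 * F 0 := by
        refine h8.trans ?_
        norm_num
      linear_combination (-(1 : ℂ) / 7) * h8'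
    rw [this, Complex.zero_re]
  constructor
  · refine (key z z').trans ?_
    have hT : (0 : ℝ) ≤ ∑ m, ∑ j, (‖z j‖ ^ 2 + ‖z' j‖ ^ 2) * ‖z m - z' m‖ :=
      Finset.sum_nonneg fun m _ => Finset.sum_nonneg fun j _ => by positivity
    refine mul_le_mul_of_nonneg_right ?_ hT
    have e : 0 < C * (l : ℝ) ^ 3 := by positivity
    nlinarith [e, hl1]
  · have hk := key z 0
    rw [hF0, sub_zero] at hk
    have hk2 : ∑ m, ∑ j, (‖z j‖ ^ 2 + ‖(0 : Fin l → ℂ) j‖ ^ 2) * ‖z m - (0 : Fin l → ℂ) m‖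
        ≤ 2 * (l : ℝ) * ∑ j, ‖z j‖ ^ 3 := by
      have : ∀ m : Fin l, ∑ j, (‖z j‖ ^ 2 + ‖(0 : Fin l → ℂ) j‖ ^ 2) * ‖z m - (0 : Fin l → ℂ) m‖
          ≤ ∑ j, (‖z j‖ ^ 3 + ‖z m‖ ^ 3) := by
        intro m
        refine Finset.sum_le_sum fun j _ => ?_
        simp only [Pi.zero_apply, norm_zero, sub_zero]
        rw [show (0:ℝ) ^ 2 = 0 by norm_num, add_zero]
        nlinarith [norm_nonneg (z j), norm_nonneg (z m), sq_nonneg (‖z j‖ - ‖z m‖),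
          mul_nonneg (norm_nonneg (z j)) (sq_nonneg (‖z j‖ - ‖z m‖)),
          mul_nonneg (norm_nonneg (z m)) (sq_nonneg (‖z j‖ - ‖z m‖)),
          mul_nonneg (norm_nonneg (z j)) (sq_nonneg ‖z m‖)]
      calc ∑ m, ∑ j, (‖z j‖ ^ 2 + ‖(0 : Fin l → ℂ) j‖ ^ 2) * ‖z m - (0 : Fin l → ℂ) m‖
          ≤ ∑ m : Fin l, ∑ j, (‖z j‖ ^ 3 + ‖z m‖ ^ 3) := Finset.sum_le_sum fun m _ => this m
        _ = 2 * (l : ℝ) * ∑ j, ‖z j‖ ^ 3 := by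
            simp only [Finset.sum_add_distrib, Finset.sum_const, Finset.card_univ,
              Fintype.card_fin, nsmul_eq_mul]
            rw [← Finset.mul_sum]
            ring
    refine hk.trans ?_
    calc 2 * C * (l : ℝ) ^ 3 * ∑ m, ∑ j, (‖z j‖ ^ 2 + ‖(0 : Fin l → ℂ) j‖ ^ 2) * ‖z m - (0 : Fin l → ℂ) m‖
        ≤ 2 * C * (l : ℝ) ^ 3 * (2 * (l : ℝ) * ∑ j, ‖z j‖ ^ 3) :=
          mul_le_mul_of_nonneg_left hk2 (by positivity)
      _ = 4 * C * (l : ℝ) ^ 4 * ∑ j, ‖z j‖ ^ 3 := by ring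
end

section
/- Let I ⊆ ℝ be an open interval with 0 ∈ I. Let a ∈ ℝ, b > 0 and q > 1, set γ = (bq)^{−1/(q−1)} and define f : [0,∞) → ℝ by f(r) = a − r + b r^q. Let G : I → ℝ be continuous and nonnegative with f(G(t)) ≥ 0 for all t ∈ I, and assume a < (1 − 1/q) γ. Then: (i) if G(0) < γ, then G(t) < γ for all t ∈ I; (ii) if G(0) > γ, then G(t) > γ for all t ∈ I. -/
open Real

theorem stmt_13 (I : Set ℝ) (hIopen : IsOpen I) (hIinterval : I.OrdConnected)
    (h0I : (0 : ℝ) ∈ I)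
    (a b q : ℝ) (hb : 0 < b) (hq : 1 < q)
    (γ : ℝ) (hγ : γ = (b * q) ^ (-(1 / (q - 1))))
    (f : ℝ → ℝ) (hf : ∀ r : ℝ, 0 ≤ r → f r = a - r + b * r ^ q)
    (G : ℝ → ℝ) (hGcont : ContinuousOn G I) (hGnonneg : ∀ t ∈ I, 0 ≤ G t)
    (hfG : ∀ t ∈ I, 0 ≤ f (G t))
    (ha : a < (1 - 1 / q) * γ) :
    (G 0 < γ → ∀ t ∈ I, G t < γ) ∧ (γ < G 0 → ∀ t ∈ I, γ < G t) := by
  have hq0 : 0 < q := lt_trans one_pos hq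
  have hbq : 0 < b * q := mul_pos hb hq0
  have hγpos : 0 < γ := by rw [hγ]; exact rpow_pos_of_pos hbq _
  have hq1 : q - 1 ≠ 0 := by linarith
  have hγpow : γ ^ (q - 1) = (b * q)⁻¹ := by
    rw [hγ, ← Real.rpow_mul hbq.le]
    · rw [show -(1 / (q - 1)) * (q - 1) = -1 by field_simp]
      exact rpow_neg_one _
  have hγq : b * γ ^ q = γ / q := by
    have : γ ^ q = γ ^ (q - 1) * γ := by
      rw [← Real.rpow_add_one hγpos.ne' (q - 1)]; ring_nf
    rw [this, hγpow]
    field_simp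
  have hfγ : f γ < 0 := by
    rw [hf γ hγpos.le, hγq]
    have : a < γ - γ / q := by
      have := ha
      rw [one_sub_div hq0.ne'] at this
      calc a < (q - 1) / q * γ := this
        _ = γ - γ / q := by field_simp
    linarith
  have hne : ∀ t ∈ I, G t ≠ γ := by
    intro t ht h
    have := hfG t ht
    rw [h] at this
    linarith
  have hIconn : IsPreconnected I := hIinterval.isPreconnected
  constructor
  · intro h0 t ht
    by_contra hle
    push_neg at hle
    have hmem : γ ∈ Set.Icc (G 0) (G t) := ⟨h0.le, hle⟩
    obtain ⟨s, hs, hGs⟩ := hIconn.intermediate_value h0I ht hGcont hmem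
    exact hne s hs hGs
  · intro h0 t ht
    by_contra hle
    push_neg at hle
    have hmem : γ ∈ Set.Icc (G t) (G 0) := ⟨hle, h0.le⟩
    obtain ⟨s, hs, hGs⟩ := hIconn.intermediate_value ht h0I hGcont hmem
    exact hne s hs hGs
end

section
/- Let I ⊆ ℝ be an open interval with 0 ∈ I. Let a ∈ ℝ, b > 0 and q > 1, set γ = (bq)^{−1/(q−1)} and define f : [0,∞) → ℝ by f(r) = a − r + b r^q. Let δ₁ ∈ (0,1). Then there exists δ₂ > 0, depending only on δ₁ and q, such that for every continuous nonnegative function G : I → ℝ with f(G(t)) ≥ 0 for all t ∈ I, if a < (1 − δ₁)(1 − 1/q) γ and G(0) > γ, then G(t) > (1 + δ₂) γ for all t ∈ I. -/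
open Real

theorem stmt_14 (q δ₁ : ℝ) (hq : 1 < q) (hδ₁ : 0 < δ₁) (hδ₁' : δ₁ < 1) :
    ∃ δ₂ : ℝ, 0 < δ₂ ∧
      ∀ (I : Set ℝ), IsOpen I → I.OrdConnected → (0 : ℝ) ∈ I →
      ∀ (a b : ℝ), 0 < b →
      ∀ (γ : ℝ), γ = (b * q) ^ (-(1 / (q - 1))) →
      ∀ f : ℝ → ℝ, (∀ r : ℝ, 0 ≤ r → f r = a - r + b * r ^ q) →
      ∀ G : ℝ → ℝ, ContinuousOn G I → (∀ t ∈ I, 0 ≤ G t) →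
      (∀ t ∈ I, 0 ≤ f (G t)) →
      a < (1 - δ₁) * ((1 - 1 / q) * γ) →
      γ < G 0 →
      ∀ t ∈ I, (1 + δ₂) * γ < G t := by
  have hq0 : 0 < q := by linarith
  have h1q : 1 / q < 1 := by rw [div_lt_one hq0]; exact hq
  set ε := δ₁ * (1 - 1 / q) with hεdef
  have hεpos : 0 < ε := mul_pos hδ₁ (by linarith)
  have hcont : ContinuousAt (fun s : ℝ => s ^ q / q - s) 1 := by
    have h1 : ContinuousAt (fun s : ℝ => s ^ q) 1 :=
      Real.continuousAt_rpow_const 1 q (Or.inl one_ne_zero)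
    exact (h1.div_const q).sub continuousAt_id
  rw [Metric.continuousAt_iff] at hcont
  obtain ⟨δ, hδpos, hδ⟩ := hcont ε hεpos
  refine ⟨δ / 2, by positivity, ?_⟩
  intro I hIopen hIord hI0 a b hb γ hγ f hf G hGcont hGnn hfG ha hG0
  have hbq : 0 < b * q := mul_pos hb hq0
  have hγpos : 0 < γ := hγ ▸ Real.rpow_pos_of_pos hbq _
  have hγq1 : γ ^ (q - 1) = (b * q)⁻¹ := by
    rw [hγ, ← Real.rpow_mul hbq.le]
    rw [show -(1 / (q - 1)) * (q - 1) = -1 by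
      have h : q - 1 ≠ 0 := by linarith
      field_simp]
    exact Real.rpow_neg_one _
  have hbγ : b * γ ^ q = γ / q := by
    have h2 : γ ^ q = γ ^ (q - 1) * γ := by
      rw [← Real.rpow_add_one hγpos.ne' (q - 1), sub_add_cancel]
    rw [h2, hγq1]
    field_simp
  have band : ∀ r : ℝ, γ ≤ r → r ≤ (1 + δ / 2) * γ → f r < 0 := by
    intro r h1 h2
    have hr0 : 0 ≤ r := le_trans hγpos.le h1
    rw [hf r hr0]
    set s := r / γ with hs
    have hs1 : 1 ≤ s := (one_le_div hγpos).mpr h1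
    have hs2 : s ≤ 1 + δ / 2 := (div_le_iff₀ hγpos).mpr h2
    have hrs : r = s * γ := by rw [hs, div_mul_cancel₀ r hγpos.ne']
    have hrq : r ^ q = s ^ q * γ ^ q := by
      rw [hrs, Real.mul_rpow (by linarith) hγpos.le]
    have hdist : dist s 1 < δ := by
      rw [Real.dist_eq, abs_of_nonneg (by linarith)]
      linarith
    have hh := hδ hdist
    rw [Real.dist_eq, Real.one_rpow] at hh
    have hub : s ^ q / q - s - (1 / q - 1) < ε := (abs_lt.mp hh).2
    have key : b * (s ^ q * γ ^ q) = s ^ q * (γ / q) := by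
      linear_combination s ^ q * hbγ
    rw [hrq, hrs, key]
    have hmul := mul_lt_mul_of_pos_left hub hγpos
    have hq' : q ≠ 0 := ne_of_gt hq0
    rw [hεdef] at hmul
    have hexp : γ * (s ^ q / q - s - (1 / q - 1)) =
        s ^ q * (γ / q) - s * γ - γ / q + γ := by ring
    have hexp2 : γ * (δ₁ * (1 - 1 / q)) = δ₁ * γ - δ₁ * (γ / q) := by ring
    have ha' : a < γ - γ / q - δ₁ * γ + δ₁ * (γ / q) := by nlinarith [ha]
    rw [hexp, hexp2] at hmul
    linarith
  have trich : ∀ t ∈ I, ¬(γ ≤ G t ∧ G t ≤ (1 + δ / 2) * γ) := by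
    intro t ht ⟨h1, h2⟩
    exact absurd (hfG t ht) (not_le.mpr (band _ h1 h2))
  have hG0' : (1 + δ / 2) * γ < G 0 := by
    by_contra hle
    exact trich 0 hI0 ⟨hG0.le, not_lt.mp hle⟩
  intro t ht
  by_contra hle
  push_neg at hle
  have hGt : G t < γ := by
    by_contra h
    exact trich t ht ⟨not_lt.mp h, hle⟩
  have hsub : Set.uIcc 0 t ⊆ I := hIord.uIcc_subset hI0 ht
  have hGc : ContinuousOn G (Set.uIcc 0 t) := hGcont.mono hsub
  have hmem : γ ∈ Set.uIcc (G 0) (G t) := by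
    rw [Set.mem_uIcc]
    right
    exact ⟨hGt.le, hG0.le⟩
  obtain ⟨u, hu, hGu⟩ := intermediate_value_uIcc hGc hmem
  have huI : u ∈ I := hsub hu
  refine trich u huI ⟨le_of_eq hGu.symm, ?_⟩
  rw [hGu]
  nlinarith [hγpos, hδpos]
end
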